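/- Let A, B be bounded linear operators on G such that Λ^{A,B} is a self-adjoint linear relation and the pair (A,B) is normalized, and let Q be a bounded linear operator on G. Define the linear relation gr Q − Λ^{A,B} := {(x, Qx − y) : (x,y) ∈ Λ^{A,B}}. Then the following are equivalent: (i) gr Q − Λ^{A,B} has trivial kernel (i.e. (x,0) ∈ gr Q − Λ^{A,B} implies x = 0) and its range {Qx − y : (x,y) ∈ Λ^{A,B}} is all of G; (ii) the operator Q B* − A* is boundedly invertible. Moreover, if these conditions hold, then the inverse relation {(Qx − y, x) : (x,y) ∈ Λ^{A,B}} equals the graph of the bounded operator B*(Q B* − A*)⁻¹. -/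

import Mathlib

open ContinuousLinearMap

variable {G : Type*} [NormedAddCommGroup G] [InnerProductSpace ℂ G] [CompleteSpace G]

/-- The operator `M^{A,B}` on `G × G`, `(x₁,x₂) ↦ (A x₁ - B x₂, B x₁ + A x₂)`. -/
noncomputable def MAB (A B : G →L[ℂ] G) : (G × G) →L[ℂ] (G × G) :=
  ((A.comp (fst ℂ G G)) - (B.comp (snd ℂ G G))).prod
    ((B.comp (fst ℂ G G)) + (A.comp (snd ℂ G G)))

/-- The linear relation `Λ^{A,B} = {(x₁,x₂) : A x₁ = B x₂}`. -/
def LambdaAB (A B : G →L[ℂ] G) : Submodule ℂ (G × G) where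
  carrier := {p | A p.1 = B p.2}
  add_mem' := by
    intro a b ha hb
    simp only [Set.mem_setOf_eq] at *
    simp [ha, hb]
  zero_mem' := by simp
  smul_mem' := by
    intro c p hp
    simp only [Set.mem_setOf_eq] at *
    simp [hp]

/-- The adjoint of a linear relation. -/
def relAdjoint (Λ : Submodule ℂ (G × G)) : Submodule ℂ (G × G) where
  carrier := {p | ∀ q ∈ Λ, (inner ℂ p.1 q.2 : ℂ) = inner ℂ p.2 q.1}
  add_mem' := by
    intro a b ha hb q hq
    simp [inner_add_left, ha q hq, hb q hq]
  zero_mem' := by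
    intro q hq; simp
  smul_mem' := by
    intro c p hp q hq
    simp [inner_smul_left, hp q hq]

/-- A linear relation is self-adjoint if it equals its adjoint. -/
def IsSelfAdjointRel (Λ : Submodule ℂ (G × G)) : Prop := relAdjoint Λ = Λ

/-- A bounded operator is boundedly invertible if it has a bounded two-sided inverse. -/
def IsBoundedlyInvertible {E F : Type*} [NormedAddCommGroup E] [NormedSpace ℂ E]
    [NormedAddCommGroup F] [NormedSpace ℂ F] (T : E →L[ℂ] F) : Prop :=
  ∃ T' : F →L[ℂ] E, (∀ x, T' (T x) = x) ∧ (∀ y, T (T' y) = y)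

/-- The pair `(A,B)` is normalized if `A B* = B A*` and `M^{A,B}` is boundedly invertible. -/
noncomputable def IsNormalized (A B : G →L[ℂ] G) : Prop :=
  A ∘L adjoint B = B ∘L adjoint A ∧ IsBoundedlyInvertible (MAB A B)

lemma aux_MAB_apply (A B : G →L[ℂ] G) (x : G × G) :
    MAB A B x = (A x.1 - B x.2, B x.1 + A x.2) := rfl

lemma aux_mem_Lambda {A B : G →L[ℂ] G} {p : G × G} :
    p ∈ LambdaAB A B ↔ A p.1 = B p.2 := Iff.rfl

lemma aux_lower {A B : G →L[ℂ] G} (M' : (G × G) →L[ℂ] (G × G))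
    (hM2 : ∀ y, MAB A B (M' y) = y) (g : G) :
    ‖g‖ ≤ ‖M'‖ * (‖adjoint A g‖ + ‖adjoint B g‖) := by
  set x := M' (g, 0) with hxdef
  have hx : MAB A B x = (g, 0) := hM2 _
  rw [aux_MAB_apply] at hx
  have h1 : A x.1 - B x.2 = g := congrArg Prod.fst hx
  have hinner : (inner ℂ g g : ℂ) = inner ℂ (adjoint A g) x.1 - inner ℂ (adjoint B g) x.2 := by
    rw [adjoint_inner_left, adjoint_inner_left, ← inner_sub_right, h1]
  have hg0 : ‖((g, 0) : G × G)‖ = ‖g‖ := by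
    rw [Prod.norm_def]
    simp
  have hxnorm : ‖x‖ ≤ ‖M'‖ * ‖g‖ := by
    have := M'.le_opNorm (g, 0)
    rwa [hg0] at this
  have hsq : ‖g‖ ^ 2 ≤ (‖adjoint A g‖ + ‖adjoint B g‖) * (‖M'‖ * ‖g‖) := by
    calc ‖g‖ ^ 2 = RCLike.re (inner ℂ g g : ℂ) := (inner_self_eq_norm_sq g).symm
      _ ≤ ‖(inner ℂ g g : ℂ)‖ := RCLike.re_le_norm _
      _ = ‖(inner ℂ (adjoint A g) x.1 - inner ℂ (adjoint B g) x.2 : ℂ)‖ := by rw [hinner]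
      _ ≤ ‖(inner ℂ (adjoint A g) x.1 : ℂ)‖ + ‖(inner ℂ (adjoint B g) x.2 : ℂ)‖ := norm_sub_le _ _
      _ ≤ ‖adjoint A g‖ * ‖x.1‖ + ‖adjoint B g‖ * ‖x.2‖ :=
          add_le_add (norm_inner_le_norm _ _) (norm_inner_le_norm _ _)
      _ ≤ ‖adjoint A g‖ * ‖x‖ + ‖adjoint B g‖ * ‖x‖ :=
          add_le_add (mul_le_mul_of_nonneg_left (norm_fst_le x) (norm_nonneg _))
            (mul_le_mul_of_nonneg_left (norm_snd_le x) (norm_nonneg _))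
      _ = (‖adjoint A g‖ + ‖adjoint B g‖) * ‖x‖ := by ring
      _ ≤ (‖adjoint A g‖ + ‖adjoint B g‖) * (‖M'‖ * ‖g‖) :=
          mul_le_mul_of_nonneg_left hxnorm (by positivity)
  rcases eq_or_lt_of_le (norm_nonneg g) with h0 | h0
  · rw [← h0]; positivity
  · nlinarith

lemma aux_inj {A B : G →L[ℂ] G} (M' : (G × G) →L[ℂ] (G × G))
    (hM2 : ∀ y, MAB A B (M' y) = y) {g : G}
    (ha : adjoint A g = 0) (hb : adjoint B g = 0) : g = 0 := by
  have := aux_lower M' hM2 g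
  rw [ha, hb] at this
  simp at this
  exact norm_le_zero_iff.mp (by simpa using this)

lemma aux_D_surj {A B : G →L[ℂ] G} (hc : A ∘L adjoint B = B ∘L adjoint A)
    (M' : (G × G) →L[ℂ] (G × G)) (hM2 : ∀ y, MAB A B (M' y) = y) :
    Function.Surjective (A ∘L adjoint A + B ∘L adjoint B) := by
  set D := A ∘L adjoint A + B ∘L adjoint B with hD
  have hre : ∀ g : G, RCLike.re (inner ℂ g (D g) : ℂ)
      = ‖adjoint A g‖ ^ 2 + ‖adjoint B g‖ ^ 2 := by
    intro g
    have e1 : (inner ℂ g (A (adjoint A g)) : ℂ) = inner ℂ (adjoint A g) (adjoint A g) :=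
      (adjoint_inner_left A (adjoint A g) g).symm
    have e2 : (inner ℂ g (B (adjoint B g)) : ℂ) = inner ℂ (adjoint B g) (adjoint B g) :=
      (adjoint_inner_left B (adjoint B g) g).symm
    have : (inner ℂ g (D g) : ℂ)
        = inner ℂ (adjoint A g) (adjoint A g) + inner ℂ (adjoint B g) (adjoint B g) := by
      rw [hD]
      rw [add_apply, comp_apply, comp_apply, inner_add_right, e1, e2]
    rw [this, map_add, inner_self_eq_norm_sq, inner_self_eq_norm_sq]
  have hbdd : ∀ g : G, ‖g‖ ≤ (2 * ‖M'‖ ^ 2) * ‖D g‖ := by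
    intro g
    have h1 := aux_lower M' hM2 g
    have h2 : RCLike.re (inner ℂ g (D g) : ℂ) ≤ ‖g‖ * ‖D g‖ :=
      le_trans (RCLike.re_le_norm _) (le_trans (norm_inner_le_norm _ _) le_rfl)
    have h3 := hre g
    rcases eq_or_lt_of_le (norm_nonneg g) with h0 | h0
    · rw [← h0]; positivity
    · nlinarith [mul_le_mul h1 h1 (norm_nonneg g) (by positivity : (0:ℝ) ≤ ‖M'‖ * (‖adjoint A g‖ + ‖adjoint B g‖)),
        sq_nonneg (‖adjoint A g‖ - ‖adjoint B g‖), norm_nonneg (D g), norm_nonneg M']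
  have hanti : AntilipschitzWith (Real.toNNReal (2 * ‖M'‖ ^ 2)) D :=
    D.antilipschitz_of_bound (fun g => by
      rw [Real.coe_toNNReal _ (by positivity)]; exact hbdd g)
  have hclosed : IsClosed (Set.range D) :=
    (hanti.isClosedEmbedding D.uniformContinuous).isClosed_range
  have hR : LinearMap.range (D : G →ₗ[ℂ] G) = ⊤ := by
    have hcl : IsClosed ((LinearMap.range (D : G →ₗ[ℂ] G) : Submodule ℂ G) : Set G) := by
      simpa [LinearMap.coe_range] using hclosed
    haveI : CompleteSpace (LinearMap.range (D : G →ₗ[ℂ] G) : Submodule ℂ G) := hcl.completeSpace_coe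
    rw [← Submodule.orthogonal_eq_bot_iff, Submodule.eq_bot_iff]
    intro g hg
    have hg' : (inner ℂ (D g) g : ℂ) = 0 :=
      hg (D g) (LinearMap.mem_range_self _ g)
    have hg'' : (inner ℂ g (D g) : ℂ) = 0 := by
      rw [← inner_conj_symm, hg', map_zero]
    have h0 : ‖adjoint A g‖ ^ 2 + ‖adjoint B g‖ ^ 2 = 0 := by
      rw [← hre g, hg'', map_zero]
    have ha : adjoint A g = 0 := by
      have : ‖adjoint A g‖ = 0 := by nlinarith [sq_nonneg ‖adjoint B g‖, norm_nonneg (adjoint A g)]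
      exact norm_eq_zero.mp this
    have hb : adjoint B g = 0 := by
      have : ‖adjoint B g‖ = 0 := by nlinarith [sq_nonneg ‖adjoint A g‖, norm_nonneg (adjoint B g)]
      exact norm_eq_zero.mp this
    exact aux_inj M' hM2 ha hb
  exact LinearMap.range_eq_top.mp hR

set_option maxHeartbeats 1000000 in
lemma aux_lambda_eq {A B : G →L[ℂ] G} (hΛ : IsSelfAdjointRel (LambdaAB A B))
    (hc : A ∘L adjoint B = B ∘L adjoint A)
    (M' : (G × G) →L[ℂ] (G × G)) (hM1 : ∀ x, M' (MAB A B x) = x)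
    (hM2 : ∀ y, MAB A B (M' y) = y) (p : G × G) :
    p ∈ LambdaAB A B ↔ ∃ g, adjoint B g = p.1 ∧ adjoint A g = p.2 := by
  have hcap : ∀ v : G, A (adjoint B v) = B (adjoint A v) := fun v => by
    have := congrArg (fun T : G →L[ℂ] G => T v) hc
    simpa using this
  constructor
  · intro hp
    obtain ⟨z₁, hz₁⟩ := aux_D_surj hc M' hM2 (A p.1 - B p.2)
    obtain ⟨z₂, hz₂⟩ := aux_D_surj hc M' hM2 (B p.1 + A p.2)
    set u₁ := adjoint A z₁ + adjoint B z₂ with hu₁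
    set u₂ := adjoint A z₂ - adjoint B z₁ with hu₂
    have e1 : A u₁ - B u₂ = (A ∘L adjoint A + B ∘L adjoint B) z₁ := by
      simp only [hu₁, hu₂, map_add, map_sub, add_apply, comp_apply]
      rw [hcap z₂]
      abel
    have e2 : B u₁ + A u₂ = (A ∘L adjoint A + B ∘L adjoint B) z₂ := by
      simp only [hu₁, hu₂, map_add, map_sub, add_apply, comp_apply]
      rw [hcap z₁]
      abel
    have hMu : MAB A B (u₁, u₂) = MAB A B p := by
      rw [aux_MAB_apply, aux_MAB_apply]
      simp only [Prod.mk.injEq]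
      exact ⟨by rw [e1, hz₁], by rw [e2, hz₂]⟩
    have hpu : p = (u₁, u₂) := by
      have h1 := congrArg M' hMu
      rw [hM1, hM1] at h1
      exact h1.symm
    have hu : ((adjoint B z₂, adjoint A z₂) : G × G) ∈ LambdaAB A B :=
      aux_mem_Lambda.mpr (hcap z₂)
    have hcomp : ((adjoint A z₁, -(adjoint B z₁)) : G × G)
        = p - (adjoint B z₂, adjoint A z₂) := by
      rw [hpu]
      simp only [Prod.mk_sub_mk, Prod.mk.injEq, hu₁, hu₂]
      constructor
      · abel
      · abel
    have hv : ((adjoint A z₁, -(adjoint B z₁)) : G × G) ∈ LambdaAB A B := by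
      rw [hcomp]
      exact (LambdaAB A B).sub_mem hp hu
    have hΛ'' : relAdjoint (LambdaAB A B) = LambdaAB A B := hΛ
    have hvv : ((adjoint A z₁, -(adjoint B z₁)) : G × G) ∈ relAdjoint (LambdaAB A B) := by
      rw [hΛ'']
      exact hv
    have hq : ((adjoint B z₁, adjoint A z₁) : G × G) ∈ LambdaAB A B :=
      aux_mem_Lambda.mpr (hcap z₁)
    have hinner : (inner ℂ (adjoint A z₁) (adjoint A z₁) : ℂ)
        = inner ℂ (-(adjoint B z₁)) (adjoint B z₁) := hvv _ hq
    have h0 : ‖adjoint A z₁‖ ^ 2 + ‖adjoint B z₁‖ ^ 2 = 0 := by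
      have := congrArg RCLike.re hinner
      rw [inner_self_eq_norm_sq, inner_neg_left, map_neg, inner_self_eq_norm_sq] at this
      linarith
    have ha : adjoint A z₁ = 0 := by
      have h1 : ‖adjoint A z₁‖ = 0 := by
        nlinarith [sq_nonneg ‖adjoint B z₁‖, norm_nonneg (adjoint A z₁)]
      simpa using h1
    have hb : adjoint B z₁ = 0 := by
      have h1 : ‖adjoint B z₁‖ = 0 := by
        nlinarith [sq_nonneg ‖adjoint A z₁‖, norm_nonneg (adjoint B z₁)]
      simpa using h1
    refine ⟨z₂, ?_, ?_⟩
    · rw [hpu]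
      simp [hu₁, ha]
    · rw [hpu]
      simp [hu₂, hb]
  · rintro ⟨g, h1, h2⟩
    rw [aux_mem_Lambda, ← h1, ← h2]
    exact hcap g

set_option maxHeartbeats 1000000 in
/-- For a normalized parameterization `(A,B)` of a self-adjoint relation
and a bounded operator `Q`, the relation `gr Q − Λ^{A,B} = {(x, Qx − y) : (x,y) ∈ Λ^{A,B}}` has
trivial kernel and full range iff `Q B* − A*` is boundedly invertible; in that case the inverse
relation `{(Qx − y, x) : (x,y) ∈ Λ^{A,B}}` is the graph of the bounded operator
`B*(Q B* − A*)⁻¹`. -/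
theorem grQ_sub_lambda_inverse (A B Q : G →L[ℂ] G)
    (hΛ : IsSelfAdjointRel (LambdaAB A B)) (hnorm : IsNormalized A B) :
    (((∀ x : G, (x, Q x) ∈ LambdaAB A B → x = 0) ∧
        (∀ g : G, ∃ p : G × G, p ∈ LambdaAB A B ∧ Q p.1 - p.2 = g)) ↔
      IsBoundedlyInvertible (Q ∘L adjoint B - adjoint A)) ∧
    (∀ T' : G →L[ℂ] G,
      (∀ x : G, T' ((Q ∘L adjoint B - adjoint A) x) = x) →
      (∀ y : G, (Q ∘L adjoint B - adjoint A) (T' y) = y) →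
      {q : G × G | ∃ p ∈ LambdaAB A B, q = (Q p.1 - p.2, p.1)} =
        {q : G × G | q.2 = adjoint B (T' q.1)}) := by
  obtain ⟨hc, M', hM1, hM2⟩ := hnorm
  have hcap : ∀ v : G, A (adjoint B v) = B (adjoint A v) := fun v => by
    have := congrArg (fun T : G →L[ℂ] G => T v) hc
    simpa using this
  have hlam := aux_lambda_eq hΛ hc M' hM1 hM2
  have hTapp : ∀ g : G, (Q ∘L adjoint B - adjoint A) g = Q (adjoint B g) - adjoint A g :=
    fun g => rfl
  constructor
  · constructor
    · rintro ⟨hker, hran⟩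
      have hsurj : Function.Surjective (Q ∘L adjoint B - adjoint A) := by
        intro h
        obtain ⟨p, hp, hpe⟩ := hran h
        obtain ⟨g, hg1, hg2⟩ := (hlam p).mp hp
        exact ⟨g, by rw [hTapp, hg1, hg2, hpe]⟩
      have hinj : Function.Injective (Q ∘L adjoint B - adjoint A) := by
        have hker0 : ∀ g : G, (Q ∘L adjoint B - adjoint A) g = 0 → g = 0 := by
          intro g hg0
          rw [hTapp] at hg0
          have hTg : Q (adjoint B g) = adjoint A g := sub_eq_zero.mp hg0
          have hmem : ((adjoint B g, Q (adjoint B g)) : G × G) ∈ LambdaAB A B := by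
            rw [aux_mem_Lambda]
            show A (adjoint B g) = B (Q (adjoint B g))
            rw [hTg]
            exact hcap g
          have hB0 : adjoint B g = 0 := hker _ hmem
          have hA0 : adjoint A g = 0 := by rw [← hTg, hB0, map_zero]
          exact aux_inj M' hM2 hA0 hB0
        intro a b hab
        have h := hker0 (a - b) (by rw [map_sub, hab, sub_self])
        exact sub_eq_zero.mp h
      let e := ContinuousLinearEquiv.ofBijective (Q ∘L adjoint B - adjoint A)
        (LinearMap.ker_eq_bot.mpr hinj) (LinearMap.range_eq_top.mpr hsurj)
      exact ⟨e.symm.toContinuousLinearMap, fun x => e.symm_apply_apply x,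
        fun y => e.apply_symm_apply y⟩
    · rintro ⟨T', hT1, hT2⟩
      constructor
      · intro x hx
        obtain ⟨g, hg1, hg2⟩ := (hlam _).mp hx
        have h0 : (Q ∘L adjoint B - adjoint A) g = 0 := by
          rw [hTapp, hg1, hg2, sub_self]
        have hg0 : g = 0 := by rw [← hT1 g, h0, map_zero]
        have hx1 : x = adjoint B g := hg1.symm
        rw [hx1, hg0, map_zero]
      · intro h
        refine ⟨(adjoint B (T' h), adjoint A (T' h)), aux_mem_Lambda.mpr (hcap (T' h)), ?_⟩
        exact hT2 h
  · intro T' hT1 hT2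
    ext q
    simp only [Set.mem_setOf_eq]
    constructor
    · rintro ⟨p, hp, rfl⟩
      obtain ⟨g, hg1, hg2⟩ := (hlam p).mp hp
      have hTg : (Q ∘L adjoint B - adjoint A) g = Q p.1 - p.2 := by
        rw [hTapp, hg1, hg2]
      show p.1 = adjoint B (T' (Q p.1 - p.2))
      calc p.1 = adjoint B g := hg1.symm
        _ = adjoint B (T' ((Q ∘L adjoint B - adjoint A) g)) := by rw [hT1]
        _ = adjoint B (T' (Q p.1 - p.2)) := by rw [hTg]
    · intro hq
      refine ⟨(adjoint B (T' q.1), adjoint A (T' q.1)), aux_mem_Lambda.mpr (hcap (T' q.1)), ?_⟩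
      have h1 : Q (adjoint B (T' q.1)) - adjoint A (T' q.1) = q.1 := hT2 q.1
      exact Prod.ext (by simp [h1]) (by simp [hq])
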